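/- Let k be an odd integer. An integer p > 1 has exactly two k-arithmetic divisors if and only if p is a power of two, i.e., p = 2^s for some s ≥ 1. -/

import Mathlib

def odot (k m n : ℤ) : ℤ := (m - n + 1) * n + n * (n - 1) * k / 2

def kDivisors (k a : ℤ) : Set ℤ := {d : ℤ | 0 < d ∧ ∃ b : ℤ, odot k b d = a}

lemma two_dvd_mul_pred (d : ℤ) : (2:ℤ) ∣ d * (d - 1) := by
  rcases Int.even_or_odd d with h | h
  · exact Dvd.dvd.mul_right h.two_dvd _
  · rcases h with ⟨t, ht⟩
    exact ⟨(2*t+1)*t, by rw [ht]; ring⟩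

lemma mem_kDivisors_iff {k p : ℤ} (d : ℤ) :
    d ∈ kDivisors k p ↔ 0 < d ∧ 2*d ∣ 2*p - d*(d-1)*k := by
  have h2 : (2:ℤ) ∣ d * (d - 1) * k := (two_dvd_mul_pred d).mul_right k
  have ht : 2 * (d * (d - 1) * k / 2) = d * (d - 1) * k := Int.mul_ediv_cancel' h2
  constructor
  · rintro ⟨hd, b, hb⟩
    refine ⟨hd, ⟨b - d + 1, ?_⟩⟩
    unfold odot at hb
    linarith [hb, ht]
  · rintro ⟨hd, c, hc⟩
    refine ⟨hd, c + d - 1, ?_⟩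
    unfold odot
    have : 2 * ((c + d - 1 - d + 1) * d + d * (d - 1) * k / 2) = 2 * p := by
      rw [mul_add, ht]; linarith [hc]
    linarith [this]

lemma one_mem_kDivisors {k p : ℤ} : (1:ℤ) ∈ kDivisors k p := by
  rw [mem_kDivisors_iff]
  exact ⟨one_pos, ⟨p, by ring⟩⟩

lemma two_p_mem_kDivisors {k p : ℤ} (hk : Odd k) (hp : 0 < p) :
    2*p ∈ kDivisors k p := by
  rw [mem_kDivisors_iff]
  rcases hk with ⟨t, ht⟩
  exact ⟨by linarith, ⟨-2*p*t - p + t + 1, by rw [ht]; ring⟩⟩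

theorem stmt_10 (k p : ℤ) (hk : Odd k) (hp : 1 < p) :
    (kDivisors k p).encard = 2 ↔ ∃ s : ℕ, 1 ≤ s ∧ p = 2 ^ s := by
  have hp0 : 0 < p := by omega
  have hne : (1:ℤ) ≠ 2*p := by omega
  constructor
  · intro h2
    -- kDivisors = {1, 2p}
    have hsub : ({1, 2*p} : Set ℤ) ⊆ kDivisors k p := by
      rintro x (rfl | rfl)
      · exact one_mem_kDivisors
      · exact two_p_mem_kDivisors hk hp0
    have heq : ({1, 2*p} : Set ℤ) = kDivisors k p := by
      apply Set.Finite.eq_of_subset_of_encard_le (Set.toFinite _) hsub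
      rw [h2, Set.encard_pair hne]
    -- odd part of p
    set n := p.toNat with hn
    have hn1 : 1 < n := by omega
    have hn0 : n ≠ 0 := by omega
    set s := n.factorization 2 with hs
    set m := n / 2 ^ s with hm
    have hmul : 2 ^ s * m = n := Nat.ordProj_mul_ordCompl_eq_self n 2
    have hmodd : ¬ (2 ∣ m) := Nat.not_dvd_ordCompl Nat.prime_two hn0
    have hmpos : 0 < m := Nat.ordCompl_pos 2 hn0
    have hmdvd : (m:ℤ) ∣ p := by
      have : m ∣ n := Nat.ordCompl_dvd n 2
      have := Int.natCast_dvd_natCast.mpr this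
      rwa [hn, Int.toNat_of_nonneg (by omega)] at this
    have hmoddZ : Odd (m:ℤ) := by
      rw [Int.odd_iff]
      omega
    have hmem : (m:ℤ) ∈ kDivisors k p := by
      rw [mem_kDivisors_iff]
      refine ⟨by exact_mod_cast hmpos, ?_⟩
      have hd2 : (2:ℤ) ∣ 2*p - m*(m-1)*k :=
        Dvd.dvd.sub ⟨p, rfl⟩ ((two_dvd_mul_pred m).mul_right k)
      have hdm : (m:ℤ) ∣ 2*p - m*(m-1)*k :=
        Dvd.dvd.sub (hmdvd.mul_left 2) ⟨(m-1)*k, by ring⟩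
      have hcop : IsCoprime (2:ℤ) (m:ℤ) := by
        rw [Int.isCoprime_iff_gcd_eq_one]
        have hg : Nat.gcd 2 m = 1 := Nat.coprime_two_left.mpr (Nat.odd_iff.mpr (by omega))
        simpa [Int.gcd] using hg
      exact hcop.mul_dvd hd2 hdm
    rw [← heq] at hmem
    have hmle : (m:ℤ) ≤ p := Int.le_of_dvd hp0 hmdvd
    have hm1 : m = 1 := by
      rcases hmem with h | h
      · exact_mod_cast h
      · simp only [Set.mem_singleton_iff] at h; omega
    refine ⟨s, ?_, ?_⟩
    · by_contra hs0
      have hseq : s = 0 := by omega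
      rw [hseq, hm1] at hmul
      simp at hmul
      omega
    · rw [hm1, mul_one] at hmul
      have : n = 2 ^ s := hmul.symm
      have : (n:ℤ) = 2 ^ s := by exact_mod_cast this
      rw [hn, Int.toNat_of_nonneg (by omega)] at this
      exact this
  · rintro ⟨s, hs1, rfl⟩
    have heq : kDivisors k (2^s) = ({1, 2*2^s} : Set ℤ) := by
      ext d
      rw [mem_kDivisors_iff]
      constructor
      · rintro ⟨hd, hdvd⟩
        rcases Int.even_or_odd d with ⟨e, he⟩ | hodd
        · -- d = 2e
          have he' : d = 2*e := by omega
          subst he'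
          have he0 : 0 < e := by omega
          have h1 : 2*e ∣ 2^s - e*(2*e-1)*k := by
            rcases hdvd with ⟨c, hc⟩
            exact ⟨c, by linarith [hc]⟩
          have hee : e ∣ (2:ℤ)^s := by
            have ha : e ∣ 2^s - e*(2*e-1)*k := (dvd_mul_left e 2).trans h1
            have hb : e ∣ e*(2*e-1)*k := ⟨(2*e-1)*k, by ring⟩
            simpa using ha.add hb
          have hen : e.natAbs ∣ 2^s := by
            have h' := Int.natAbs_dvd_natAbs.mpr hee
            simp only [Int.natAbs_pow, Int.natAbs_natCast] at h'
            exact h'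
          rcases (Nat.dvd_prime_pow Nat.prime_two).mp hen with ⟨j, hjs, hej⟩
          have heZ : e = 2^j := by
            have h' : (e.natAbs : ℤ) = ((2^j : ℕ) : ℤ) := by exact_mod_cast hej
            rw [Int.natAbs_of_nonneg he0.le] at h'
            push_cast at h'
            exact h'
          rcases eq_or_lt_of_le hjs with rfl | hjlt
          · right
            rw [Set.mem_singleton_iff, heZ]
          · exfalso
            have h2j : (2:ℤ)*2^j ∣ 2^s := by
              have h' := pow_dvd_pow (2:ℤ) hjlt
              rwa [pow_succ, mul_comm] at h'
            rw [heZ] at h1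
            have hsub2 := dvd_sub h2j h1
            have heq2 : (2:ℤ)^s - (2^s - 2^j*(2*2^j-1)*k) = 2^j*((2*2^j-1)*k) := by ring
            rw [heq2] at hsub2
            have h2k : (2:ℤ) ∣ (2*2^j-1)*k :=
              (mul_dvd_mul_iff_left (pow_ne_zero j (two_ne_zero (α := ℤ)))).mp
                (by rw [show ((2:ℤ)^j*2) = 2*2^j from mul_comm _ _]; exact hsub2)
            have hodd' : Odd ((2*(2:ℤ)^j-1)*k) := Odd.mul ⟨2^j - 1, by ring⟩ hk
            rcases h2k with ⟨c, hc⟩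
            rcases hodd' with ⟨t, ht⟩
            omega
        · -- d odd
          have hddvd : d ∣ 2 * 2^s := by
            have h1 : d ∣ 2*2^s - d*(d-1)*k := (dvd_mul_left d 2).trans hdvd
            have h2 : d ∣ d*(d-1)*k := ⟨(d-1)*k, by ring⟩
            have := h1.add h2
            simpa using this
          have hdn : d.natAbs ∣ 2^(s+1) := by
            have h' : d ∣ 2^(s+1) := by rw [pow_succ]; convert hddvd using 1; ring
            have h'' := Int.natAbs_dvd_natAbs.mpr h'
            simp only [Int.natAbs_pow, Int.natAbs_natCast] at h''
            exact h''
          rcases (Nat.dvd_prime_pow Nat.prime_two).mp hdn with ⟨j, hj, hdj⟩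
          have hj0 : j = 0 := by
            by_contra hj0
            have hdv : 2 ∣ d.natAbs := hdj ▸ dvd_pow_self 2 hj0
            have h2d : (2:ℤ) ∣ d := Int.dvd_natAbs.mp (Int.natCast_dvd_natCast.mpr hdv)
            rcases h2d with ⟨c, hc⟩
            rcases hodd with ⟨t, ht⟩
            omega
          left
          have : d.natAbs = 1 := by rw [hdj, hj0, pow_zero]
          omega
      · rintro (rfl | rfl)
        · exact (mem_kDivisors_iff 1).mp one_mem_kDivisors
        · have := (mem_kDivisors_iff (2*2^s)).mp (two_p_mem_kDivisors (p := 2^s) hk (by positivity))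
          exact this
    rw [heq]
    refine Set.encard_pair ?_
    have h : (1:ℤ) ≤ 2^s := one_le_pow₀ one_le_two
    nlinarith
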